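/- Let N₁, N₂ be manifolds with (p,q)-pairs 𝔛_τ = (P_τ, Q_τ) (C¹ maps P_τ : N_τ → ℝ^p, Q_τ : N_τ → ℝ^q), U ⊆ N₁ open, f : U → N₂ a C¹ embedding, R ⊆ U, and μ, γ > 0. If f satisfies the (𝔛₁, 𝔛₂, θ, μ, γ)-cone condition on R for every θ > 0 (i.e. f is (𝔛₁,𝔛₂,μ,γ)-dominated on R), then for every x ∈ R: (i) for every v ∈ T_x U with v ∉ Ker D_x(P₂ ∘ f), ‖D(P₂ ∘ f)(v)‖ < μ⁻¹ ‖DP₁(v)‖; and (ii) for every w ∈ T_x U with w ∉ Ker D_x Q₁, ‖D(Q₂ ∘ f)(w)‖ > γ ‖DQ₁(w)‖. -/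

import Mathlib

open Set

noncomputable section

/-- The `(𝔖,θ)`-cone at `x` for the pair `𝔖 = (P,Q)`:
vectors `v` with `‖D_x Q (v)‖ ≤ θ ‖D_x P (v)‖`. -/
def coneSet {E F G : Type*} [NormedAddCommGroup E] [NormedSpace ℝ E]
    [NormedAddCommGroup F] [NormedSpace ℝ F] [NormedAddCommGroup G] [NormedSpace ℝ G]
    (P : E → F) (Q : E → G) (θ : ℝ) (x : E) : Set E :=
  {v | ‖fderiv ℝ Q x v‖ ≤ θ * ‖fderiv ℝ P x v‖}

variable {E₁ E₂ F G : Type*}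
  [NormedAddCommGroup E₁] [NormedSpace ℝ E₁]
  [NormedAddCommGroup E₂] [NormedSpace ℝ E₂]
  [NormedAddCommGroup F] [NormedSpace ℝ F]
  [NormedAddCommGroup G] [NormedSpace ℝ G]

/-- The `(𝔛₁,𝔛₂,θ)`-cone invariance condition on `R`, with explicit inner width `θ'`:
`Df⁻¹(C_θ(f x, 𝔛₂)) ⊆ C_{θ'}(x,𝔛₁)` and `Df(C_θ(x,𝔛₁ᵗ)) ⊆ C_{θ'}(f x,𝔛₂ᵗ)`. -/
def ConeInvarianceWith (P₁ : E₁ → F) (Q₁ : E₁ → G) (P₂ : E₂ → F) (Q₂ : E₂ → G)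
    (f : E₁ → E₂) (R : Set E₁) (θ' θ : ℝ) : Prop :=
  0 < θ' ∧ θ' < θ ∧ ∀ x ∈ R,
    ⇑(fderiv ℝ f x) ⁻¹' coneSet P₂ Q₂ θ (f x) ⊆ coneSet P₁ Q₁ θ' x ∧
    ⇑(fderiv ℝ f x) '' coneSet Q₁ P₁ θ x ⊆ coneSet Q₂ P₂ θ' (f x)

/-- The `(𝔛₁,𝔛₂,θ,μ,γ)`-dilatation condition on `R`. -/
def DilatationCond (P₁ : E₁ → F) (Q₁ : E₁ → G) (P₂ : E₂ → F) (Q₂ : E₂ → G)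
    (f : E₁ → E₂) (R : Set E₁) (θ μ γ : ℝ) : Prop :=
  ∀ x ∈ R,
    (∀ v : E₁, fderiv ℝ f x v ∈ coneSet P₂ Q₂ θ (f x) → fderiv ℝ f x v ≠ 0 →
      μ * ‖fderiv ℝ P₂ (f x) (fderiv ℝ f x v)‖ < ‖fderiv ℝ P₁ x v‖) ∧
    (∀ v ∈ coneSet Q₁ P₁ θ x, v ≠ (0 : E₁) →
      γ * ‖fderiv ℝ Q₁ x v‖ < ‖fderiv ℝ Q₂ (f x) (fderiv ℝ f x v)‖)

/-- The `(𝔛₁,𝔛₂,θ,μ,γ)`-cone condition on `R`. -/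
def ConeCondition (P₁ : E₁ → F) (Q₁ : E₁ → G) (P₂ : E₂ → F) (Q₂ : E₂ → G)
    (f : E₁ → E₂) (R : Set E₁) (θ μ γ : ℝ) : Prop :=
  (∃ θ', ConeInvarianceWith P₁ Q₁ P₂ Q₂ f R θ' θ) ∧
  DilatationCond P₁ Q₁ P₂ Q₂ f R θ μ γ

/-- If a `C¹` embedding `f` is `(𝔛₁,𝔛₂,μ,γ)`-dominated on `R` (i.e. satisfies the
cone condition for every `θ > 0`), then pointwise
`‖D(P₂∘f)(v)‖ < μ⁻¹‖DP₁(v)‖` off `Ker D(P₂∘f)` and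
`‖D(Q₂∘f)(w)‖ > γ‖DQ₁(w)‖` off `Ker DQ₁`. -/
theorem stmt4 (P₁ : E₁ → F) (Q₁ : E₁ → G) (P₂ : E₂ → F) (Q₂ : E₂ → G)
    (U : Set E₁) (hU : IsOpen U) (f : E₁ → E₂)
    (hf : ContDiffOn ℝ 1 f U) (hfinj : InjOn f U)
    (hDf : ∀ x ∈ U, Function.Injective (fderiv ℝ f x))
    (hP₁ : Differentiable ℝ P₁) (hQ₁ : Differentiable ℝ Q₁)
    (hP₂ : Differentiable ℝ P₂) (hQ₂ : Differentiable ℝ Q₂)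
    (R : Set E₁) (hR : R ⊆ U) (μ γ : ℝ) (hμ : 0 < μ) (hγ : 0 < γ)
    (hdom : ∀ θ > 0, ConeCondition P₁ Q₁ P₂ Q₂ f R θ μ γ) :
    (∀ x ∈ R, ∀ v : E₁, fderiv ℝ (P₂ ∘ f) x v ≠ 0 →
        ‖fderiv ℝ (P₂ ∘ f) x v‖ < μ⁻¹ * ‖fderiv ℝ P₁ x v‖) ∧
    (∀ x ∈ R, ∀ w : E₁, fderiv ℝ Q₁ x w ≠ 0 →
        γ * ‖fderiv ℝ Q₁ x w‖ < ‖fderiv ℝ (Q₂ ∘ f) x w‖) := by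
  have hfd : ∀ x ∈ R, DifferentiableAt ℝ f x := fun x hx =>
    (hf.differentiableOn one_ne_zero).differentiableAt (hU.mem_nhds (hR hx))
  constructor
  · intro x hx v hv
    have hchain : fderiv ℝ (P₂ ∘ f) x = (fderiv ℝ P₂ (f x)).comp (fderiv ℝ f x) :=
      fderiv_comp x (hP₂ (f x)) (hfd x hx)
    rw [hchain] at hv ⊢
    simp only [ContinuousLinearMap.comp_apply] at hv ⊢
    set w := fderiv ℝ f x v with hw
    have hwne : w ≠ 0 := fun h => hv (by rw [h]; simp)
    have hPw : (0:ℝ) < ‖fderiv ℝ P₂ (f x) w‖ := norm_pos_iff.mpr hv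
    set θ : ℝ := max 1 (‖fderiv ℝ Q₂ (f x) w‖ / ‖fderiv ℝ P₂ (f x) w‖) with hθ
    have hθpos : (0:ℝ) < θ := lt_of_lt_of_le one_pos (le_max_left _ _)
    have hcone : w ∈ coneSet P₂ Q₂ θ (f x) := by
      have : ‖fderiv ℝ Q₂ (f x) w‖ ≤ (‖fderiv ℝ Q₂ (f x) w‖ / ‖fderiv ℝ P₂ (f x) w‖) *
          ‖fderiv ℝ P₂ (f x) w‖ := by
        rw [div_mul_cancel₀ _ (ne_of_gt hPw)]
      exact this.trans (mul_le_mul_of_nonneg_right (le_max_right _ _) (norm_nonneg _))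
    have hdil := ((hdom θ hθpos).2 x hx).1 v hcone hwne
    calc ‖fderiv ℝ P₂ (f x) w‖ = μ⁻¹ * (μ * ‖fderiv ℝ P₂ (f x) w‖) := by
          field_simp
      _ < μ⁻¹ * ‖fderiv ℝ P₁ x v‖ := by
          exact mul_lt_mul_of_pos_left hdil (inv_pos.mpr hμ)
  · intro x hx w hw
    have hchain : fderiv ℝ (Q₂ ∘ f) x = (fderiv ℝ Q₂ (f x)).comp (fderiv ℝ f x) :=
      fderiv_comp x (hQ₂ (f x)) (hfd x hx)
    rw [hchain]
    simp only [ContinuousLinearMap.comp_apply]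
    have hQw : (0:ℝ) < ‖fderiv ℝ Q₁ x w‖ := norm_pos_iff.mpr hw
    have hwne : w ≠ 0 := fun h => hw (by rw [h]; simp)
    set θ : ℝ := max 1 (‖fderiv ℝ P₁ x w‖ / ‖fderiv ℝ Q₁ x w‖) with hθ
    have hθpos : (0:ℝ) < θ := lt_of_lt_of_le one_pos (le_max_left _ _)
    have hcone : w ∈ coneSet Q₁ P₁ θ x := by
      have : ‖fderiv ℝ P₁ x w‖ ≤ (‖fderiv ℝ P₁ x w‖ / ‖fderiv ℝ Q₁ x w‖) *
          ‖fderiv ℝ Q₁ x w‖ := by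
        rw [div_mul_cancel₀ _ (ne_of_gt hQw)]
      exact this.trans (mul_le_mul_of_nonneg_right (le_max_right _ _) (norm_nonneg _))
    exact ((hdom θ hθpos).2 x hx).2 w hcone hwne

end
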